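/- arXiv:2104.01803 — 6 statements merged into one kernel-verified Lean document; each statement's English description precedes it below -/
import Mathlib

section
/- For every real z, t > 0, continuous φ : [0,t] → ℝ, and 0 < s ≤ t, one has 1/A_s(T_z(φ)) = 1/A_s(φ) + (e^z − 1)/A_t(φ). In particular A_t(T_z(φ)) = e^{−z} A_t(φ). -/
open MeasureTheory Real

noncomputable def pathA (φ : ℝ → ℝ) (s : ℝ) : ℝ := ∫ u in (0:ℝ)..s, Real.exp (2 * φ u)

noncomputable def pathT (t z : ℝ) (φ : ℝ → ℝ) (s : ℝ) : ℝ :=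
  φ s - Real.log (1 + (pathA φ s / pathA φ t) * (Real.exp z - 1))

lemma exp_two_sub_log (a b : ℝ) (hb : 0 < b) :
    Real.exp (2 * (a - Real.log b)) = Real.exp (2 * a) / b ^ 2 := by
  have h2 : Real.exp (2 * Real.log b) = b ^ 2 := by
    rw [show (2 : ℝ) * Real.log b = Real.log (b ^ 2) by rw [Real.log_pow]; norm_num]
    exact Real.exp_log (by positivity)
  rw [mul_sub, Real.exp_sub, h2]

theorem stmt1 (z t : ℝ) (ht : 0 < t) (φ : ℝ → ℝ) (hφ : Continuous φ)
    (s : ℝ) (hs : 0 < s) (hst : s ≤ t) :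
    (pathA (pathT t z φ) s)⁻¹ = (pathA φ s)⁻¹ + (Real.exp z - 1) / pathA φ t ∧
    pathA (pathT t z φ) t = Real.exp (-z) * pathA φ t := by
  set E := Real.exp z with hEdef
  have hA : ∀ u : ℝ, HasDerivAt (pathA φ) (Real.exp (2 * φ u)) u := by
    intro u
    have hc : Continuous fun u => Real.exp (2 * φ u) :=
      Real.continuous_exp.comp (continuous_const.mul hφ)
    exact (hc.integral_hasStrictDerivAt 0 u).hasDerivAt
  have hA0 : pathA φ 0 = 0 := by simp [pathA]
  have hmono : StrictMono (pathA φ) :=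
    strictMono_of_deriv_pos fun u => by
      rw [(hA u).deriv]; positivity
  have hAcont : Continuous (pathA φ) :=
    Differentiable.continuous (fun u => (hA u).differentiableAt)
  have hAt : 0 < pathA φ t := by
    have := hmono ht; rwa [hA0] at this
  have hAs : 0 < pathA φ s := by
    have := hmono hs; rwa [hA0] at this
  set c : ℝ := (E - 1) / pathA φ t with hcdef
  have hcrw : ∀ x : ℝ, x / pathA φ t * (E - 1) = x * c := fun x => by
    rw [hcdef]; ring
  have hDpos : ∀ u ∈ Set.Icc (0 : ℝ) t, 0 < 1 + pathA φ u * c := by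
    rintro u ⟨hu0, hut⟩
    have hAu0 : 0 ≤ pathA φ u := by
      have := hmono.monotone hu0; rwa [hA0] at this
    have hAut : pathA φ u ≤ pathA φ t := hmono.monotone hut
    have hE0 : 0 < E := Real.exp_pos z
    rcases le_or_gt 1 E with hE1 | hE1
    · have : 0 ≤ pathA φ u * c :=
        mul_nonneg hAu0 (div_nonneg (by linarith) hAt.le)
      linarith
    · have hc0 : c ≤ 0 := div_nonpos_of_nonpos_of_nonneg (by linarith) hAt.le
      have h1 : pathA φ t * c ≤ pathA φ u * c := mul_le_mul_of_nonpos_right hAut hc0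
      have h2 : pathA φ t * c = E - 1 := by
        rw [hcdef]; field_simp
      linarith
  -- key formula
  have key : ∀ r : ℝ, 0 < r → r ≤ t →
      pathA (pathT t z φ) r = pathA φ r / (1 + pathA φ r * c) := by
    intro r hr hrt
    have hsub : Set.uIcc (0 : ℝ) r ⊆ Set.Icc 0 t := by
      rw [Set.uIcc_of_le hr.le]
      exact Set.Icc_subset_Icc le_rfl hrt
    have hTeq : ∀ u : ℝ, pathT t z φ u = φ u - Real.log (1 + pathA φ u * c) := by
      intro u; rw [pathT, hcrw]
    have hexp : ∀ u ∈ Set.uIcc (0 : ℝ) r,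
        Real.exp (2 * pathT t z φ u) = Real.exp (2 * φ u) / (1 + pathA φ u * c) ^ 2 := by
      intro u hu
      rw [hTeq u, exp_two_sub_log _ _ (hDpos u (hsub hu))]
    have hg : ∀ u ∈ Set.uIcc (0 : ℝ) r,
        HasDerivAt (fun v => pathA φ v / (1 + pathA φ v * c))
          (Real.exp (2 * pathT t z φ u)) u := by
      intro u hu
      have hD : (0 : ℝ) < 1 + pathA φ u * c := hDpos u (hsub hu)
      have h1 : HasDerivAt (fun v => 1 + pathA φ v * c) (Real.exp (2 * φ u) * c) u :=
        ((hA u).mul_const c).const_add 1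
      have h2 := (hA u).div h1 (ne_of_gt hD)
      refine h2.congr_deriv ?_
      rw [hexp u hu]
      field_simp
      ring
    have hint : IntervalIntegrable (fun u => Real.exp (2 * pathT t z φ u)) volume 0 r := by
      apply ContinuousOn.intervalIntegrable
      apply Real.continuous_exp.comp_continuousOn
      apply ContinuousOn.mul continuousOn_const
      apply ContinuousOn.sub hφ.continuousOn
      apply ContinuousOn.log
      · exact (continuous_const.add ((hAcont.div_const _).mul continuous_const)).continuousOn
      · intro u hu
        have := hDpos u (hsub hu)
        rw [hcrw]
        exact ne_of_gt this
    have := intervalIntegral.integral_eq_sub_of_hasDerivAt hg hint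
    simpa [pathA, hA0] using this
  have keys := key s hs hst
  have keyt := key t ht le_rfl
  constructor
  · rw [keys, inv_div]
    rw [hcdef]
    field_simp
  · have hDt : 1 + pathA φ t * c = E := by
      rw [hcdef]; field_simp; ring
    rw [keyt, hDt, Real.exp_neg, hEdef]
    field_simp
end

section
/- The transformations T_z form a group under composition: for all real z, z′, T_z ∘ T_{z′} = T_{z+z′} as maps on C([0,t];ℝ). In particular T_z ∘ T_{−z} is the identity map. -/
open MeasureTheory Real

section aux

variable {φ : ℝ → ℝ} (hφ : Continuous φ)
include hφ

lemma pathA_hasDerivAt (u : ℝ) : HasDerivAt (pathA φ) (Real.exp (2 * φ u)) u :=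
  ((Real.continuous_exp.comp ((continuous_const).mul hφ)).integral_hasStrictDerivAt 0 u).hasDerivAt

lemma pathA_strictMono : StrictMono (pathA φ) := by
  apply strictMono_of_deriv_pos
  intro u
  rw [(pathA_hasDerivAt hφ u).deriv]
  exact Real.exp_pos _

omit hφ in
lemma pathA_zero : pathA φ 0 = 0 := intervalIntegral.integral_same

lemma pathA_nonneg {u : ℝ} (hu : 0 ≤ u) : 0 ≤ pathA φ u := by
  rw [← pathA_zero (φ := φ)]
  exact (pathA_strictMono hφ).monotone hu

lemma pathA_pos {u : ℝ} (hu : 0 < u) : 0 < pathA φ u := by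
  rw [← pathA_zero (φ := φ)]
  exact pathA_strictMono hφ hu

/-- positivity of the denominator -/
lemma denom_pos {t : ℝ} (ht : 0 < t) (c : ℝ) (hc : -1 < c) {u : ℝ} (hu : 0 ≤ u)
    (hut : u ≤ t) : 0 < pathA φ t + pathA φ u * c := by
  have h0 : 0 ≤ pathA φ u := pathA_nonneg hφ hu
  have h1 : pathA φ u ≤ pathA φ t := (pathA_strictMono hφ).monotone hut
  have h2 : 0 < pathA φ t := pathA_pos hφ ht
  nlinarith [mul_nonneg h0 (by linarith : (0:ℝ) ≤ 1 + c)]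

/-- The key integral computation -/
lemma pathA_pathT {t : ℝ} (ht : 0 < t) (z' : ℝ) {s : ℝ} (hs : 0 ≤ s) (hst : s ≤ t) :
    pathA (pathT t z' φ) s =
      pathA φ t * pathA φ s / (pathA φ t + pathA φ s * (Real.exp z' - 1)) := by
  set c := Real.exp z' - 1 with hc
  have hc1 : -1 < c := by have := Real.exp_pos z'; simp [hc]; linarith
  set T := pathA φ t with hT
  have hTpos : 0 < T := pathA_pos hφ ht
  have hdpos : ∀ u ∈ Set.Icc (0:ℝ) s, 0 < T + pathA φ u * c := fun u hu =>
    denom_pos hφ ht c hc1 hu.1 (hu.2.trans hst)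
  -- the integrand rewritten
  have hint : ∀ u ∈ Set.Icc (0:ℝ) s,
      Real.exp (2 * pathT t z' φ u) = Real.exp (2 * φ u) * T ^ 2 / (T + pathA φ u * c) ^ 2 := by
    intro u hu
    have hd := hdpos u hu
    have harg : 1 + pathA φ u / T * c = (T + pathA φ u * c) / T := by
      field_simp
    have hpos : (0:ℝ) < (T + pathA φ u * c) / T := by positivity
    have hx : Real.exp (2 * Real.log ((T + pathA φ u * c) / T)) =
        ((T + pathA φ u * c) / T) ^ 2 := by
      rw [show (2:ℝ) * Real.log ((T + pathA φ u * c) / T) =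
        Real.log (((T + pathA φ u * c) / T) ^ 2) by rw [Real.log_pow]; norm_num,
        Real.exp_log (by positivity)]
    rw [pathT, mul_sub, Real.exp_sub, harg, hx]
    field_simp
  -- F and its derivative
  set F : ℝ → ℝ := fun u => T * pathA φ u / (T + pathA φ u * c) with hF
  have hFderiv : ∀ u ∈ Set.uIcc (0:ℝ) s,
      HasDerivAt F (Real.exp (2 * pathT t z' φ u)) u := by
    intro u hu
    rw [Set.uIcc_of_le hs] at hu
    have hd := hdpos u hu
    have hA := pathA_hasDerivAt hφ u
    have h1 : HasDerivAt (fun u => T * pathA φ u) (T * Real.exp (2 * φ u)) u :=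
      hA.const_mul T
    have h2 : HasDerivAt (fun u => T + pathA φ u * c) (Real.exp (2 * φ u) * c) u :=
      ((hA.mul_const c).const_add T)
    have h3 := h1.div h2 hd.ne'
    refine h3.congr_deriv ?_
    rw [hint u hu]
    field_simp
    ring
  have hcont : ContinuousOn (fun u => Real.exp (2 * pathT t z' φ u)) (Set.uIcc 0 s) := by
    rw [Set.uIcc_of_le hs]
    apply Real.continuous_exp.comp_continuousOn
    apply ContinuousOn.mul continuousOn_const
    apply ContinuousOn.sub (hφ.continuousOn)
    apply ContinuousOn.log
    · apply ContinuousOn.add continuousOn_const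
      apply ContinuousOn.mul _ continuousOn_const
      exact ((continuous_iff_continuousAt.2 fun u =>
        (pathA_hasDerivAt hφ u).continuousAt).continuousOn).div_const T
    · intro u hu
      have hd := hdpos u hu
      have : 1 + pathA φ u / T * c = (T + pathA φ u * c) / T := by field_simp
      rw [this]
      positivity
  have := intervalIntegral.integral_eq_sub_of_hasDerivAt hFderiv
    (hcont.intervalIntegrable)
  rw [pathA]
  rw [this, hF]
  simp [pathA_zero]

end aux

theorem stmt2_aux (t : ℝ) (ht : 0 < t) (z z' : ℝ) (φ : ℝ → ℝ) (hφ : Continuous φ)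
    (s : ℝ) (hs : 0 ≤ s) (hst : s ≤ t) :
    pathT t z (pathT t z' φ) s = pathT t (z + z') φ s := by
  set c := Real.exp z' - 1 with hc
  have hc1 : -1 < c := by have := Real.exp_pos z'; simp [hc]; linarith
  set T := pathA φ t with hT
  have hTpos : 0 < T := pathA_pos hφ ht
  have has : 0 ≤ pathA φ s := pathA_nonneg hφ hs
  have hds := denom_pos hφ ht c hc1 hs hst
  have hds' := denom_pos hφ ht (Real.exp (z + z') - 1)
    (by have := Real.exp_pos (z + z'); linarith) hs hst
  have hAs := pathA_pathT hφ ht z' hs hst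
  have hAt := pathA_pathT hφ ht z' ht.le le_rfl
  rw [pathT, pathT, pathT, hAs, hAt]
  rw [← hc, ← hT]
  have hdt : 0 < T + T * c := by nlinarith
  have hratio : T * pathA φ s / (T + pathA φ s * c) / (T * T / (T + T * c)) =
      pathA φ s * (1 + c) / (T + pathA φ s * c) := by
    field_simp
  rw [hratio]
  have h1 : 1 + pathA φ s / T * c = (T + pathA φ s * c) / T := by field_simp
  have h2 : 1 + pathA φ s * (1 + c) / (T + pathA φ s * c) * (Real.exp z - 1) =
      (T + pathA φ s * (Real.exp (z + z') - 1)) / (T + pathA φ s * c) := by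
    rw [hc, Real.exp_add]
    have hne : T + pathA φ s * (Real.exp z' - 1) ≠ 0 := hds.ne'
    field_simp
    ring
  have h3 : 1 + pathA φ s / T * (Real.exp (z + z') - 1) =
      (T + pathA φ s * (Real.exp (z + z') - 1)) / T := by field_simp
  rw [h1, h2, h3, sub_sub, ← Real.log_mul (by positivity) (by positivity)]
  congr 2
  have hne : T + pathA φ s * c ≠ 0 := hds.ne'
  field_simp

theorem stmt2 (t : ℝ) (ht : 0 < t) (z z' : ℝ) (φ : ℝ → ℝ) (hφ : Continuous φ)
    (s : ℝ) (hs : 0 ≤ s) (hst : s ≤ t) :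
    pathT t z (pathT t z' φ) s = pathT t (z + z') φ s ∧
    pathT t z (pathT t (-z) φ) s = φ s := by
  refine ⟨stmt2_aux t ht z z' φ hφ s hs hst, ?_⟩
  rw [stmt2_aux t ht z (-z) φ hφ s hs hst]
  simp [pathT]
end

section
/- For every real z, t > 0, and continuous φ : [0,t] → ℝ, the functional Z_s(φ) := e^{−φ(s)} A_s(φ) is invariant under T_z, i.e. Z_s(T_z(φ)) = Z_s(φ) for all 0 ≤ s ≤ t. -/
open MeasureTheory Real

noncomputable def pathZ (φ : ℝ → ℝ) (s : ℝ) : ℝ := Real.exp (-φ s) * pathA φ s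

theorem stmt3 (z t : ℝ) (ht : 0 < t) (φ : ℝ → ℝ) (hφ : Continuous φ)
    (s : ℝ) (hs : 0 ≤ s) (hst : s ≤ t) :
    pathZ (pathT t z φ) s = pathZ φ s := by
  have hc : Continuous fun u => Real.exp (2 * φ u) := by continuity
  have hInt : ∀ a b : ℝ, IntervalIntegrable (fun u => Real.exp (2 * φ u)) volume a b :=
    fun a b => hc.intervalIntegrable a b
  have hB : ∀ u : ℝ, HasDerivAt (pathA φ) (Real.exp (2 * φ u)) u := by
    intro u
    exact (intervalIntegral.integral_hasStrictDerivAt_right (hInt 0 u)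
      (hc.stronglyMeasurableAtFilter _ _) hc.continuousAt).hasDerivAt
  have hBcont : Continuous (pathA φ) :=
    continuous_iff_continuousAt.2 fun u => (hB u).continuousAt
  have hBt : 0 < pathA φ t := by
    apply intervalIntegral.intervalIntegral_pos_of_pos (hInt 0 t) _ ht
    intro x; exact Real.exp_pos _
  set c : ℝ := (Real.exp z - 1) / pathA φ t with hcdef
  have hBmono : ∀ u v : ℝ, u ≤ v → pathA φ u ≤ pathA φ v := by
    intro u v huv
    have : pathA φ v - pathA φ u = ∫ x in u..v, Real.exp (2 * φ x) := by
      unfold pathA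
      rw [← intervalIntegral.integral_add_adjacent_intervals (hInt 0 u) (hInt u v)]
      ring
    nlinarith [intervalIntegral.integral_nonneg (μ := volume) huv (fun x _ => (Real.exp_pos (2 * φ x)).le)]
  have hB0 : pathA φ 0 = 0 := by unfold pathA; simp
  have hpos : ∀ u : ℝ, 0 ≤ u → u ≤ t → 0 < 1 + c * pathA φ u := by
    intro u hu hut
    have h0u : (0:ℝ) ≤ pathA φ u := by rw [← hB0]; exact hBmono 0 u hu
    have hut' : pathA φ u ≤ pathA φ t := hBmono u t hut
    rcases le_or_gt 0 c with h | h
    · nlinarith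
    · have : c * pathA φ u ≥ c * pathA φ t := by nlinarith
      have hct : c * pathA φ t = Real.exp z - 1 := by
        rw [hcdef]; field_simp
      nlinarith [Real.exp_pos z]
  have hT : ∀ u : ℝ, pathT t z φ u = φ u - Real.log (1 + c * pathA φ u) := by
    intro u
    unfold pathT
    rw [hcdef]
    congr 2
    field_simp
  -- key: exp(2 * pathT u) = exp(2 φ u) / (1 + c * pathA φ u)^2 for u in [0,t]
  have hexpT : ∀ u : ℝ, 0 ≤ u → u ≤ t →
      Real.exp (2 * pathT t z φ u) =
        Real.exp (2 * φ u) / (1 + c * pathA φ u) ^ 2 := by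
    intro u hu hut
    have hx := hpos u hu hut
    rw [hT u, mul_sub, Real.exp_sub,
      show (2:ℝ) * Real.log (1 + c * pathA φ u) = Real.log ((1 + c * pathA φ u) ^ 2) by
        rw [Real.log_pow]; push_cast; ring,
      Real.exp_log (pow_pos hx 2)]
  set g : ℝ → ℝ := fun u => pathA φ u / (1 + c * pathA φ u) with hgdef
  have hg : ∀ u : ℝ, 0 ≤ u → u ≤ t →
      HasDerivAt g (Real.exp (2 * pathT t z φ u)) u := by
    intro u hu hut
    have hx := hpos u hu hut
    have hd : HasDerivAt (fun v => 1 + c * pathA φ v) (c * Real.exp (2 * φ u)) u :=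
      ((hB u).const_mul c).const_add 1
    have := (hB u).div hd hx.ne'
    rw [hexpT u hu hut]
    refine this.congr_deriv ?_
    field_simp
    ring
  have hIntT : IntervalIntegrable (fun u => Real.exp (2 * pathT t z φ u)) volume 0 s := by
    apply ContinuousOn.intervalIntegrable
    have huIcc : Set.uIcc (0:ℝ) s = Set.Icc 0 s := Set.uIcc_of_le hs
    rw [huIcc]
    intro u hu
    have hx := hpos u hu.1 (hu.2.trans hst)
    have : ContinuousAt (fun u => Real.exp (2 * pathT t z φ u)) u := by
      have h1 : ContinuousAt (fun v => 1 + c * pathA φ v) u := by fun_prop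
      have h2 : ContinuousAt (fun v => Real.log (1 + c * pathA φ v)) u :=
        ContinuousAt.log h1 hx.ne'
      have h3 : ContinuousAt (pathT t z φ) u := by
        have heq : pathT t z φ = fun v => φ v - Real.log (1 + c * pathA φ v) := funext hT
        rw [heq]
        exact hφ.continuousAt.sub h2
      exact Real.continuous_exp.continuousAt.comp (continuousAt_const.mul h3)
    exact this.continuousWithinAt
  have hAT : pathA (pathT t z φ) s = g s - g 0 := by
    unfold pathA
    apply intervalIntegral.integral_eq_sub_of_hasDerivAt _ hIntT
    intro u hu
    rw [Set.uIcc_of_le hs] at hu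
    exact hg u hu.1 (hu.2.trans hst)
  have hg0 : g 0 = 0 := by rw [hgdef]; simp [hB0]
  have hxs := hpos s hs hst
  unfold pathZ
  rw [hAT, hg0, sub_zero, hT s]
  simp only [hgdef]
  rw [neg_sub, Real.exp_sub, Real.exp_log hxs, Real.exp_neg]
  field_simp
end

section
/- Let φ ∈ C([0,∞);ℝ) with A_∞(φ) := ∫₀^∞ e^{2φ(u)} du < ∞, and define T*_z(φ)(s) = φ(s) − log(1 + (A_s(φ)/A_∞(φ))(e^z − 1)). Then T*_{−z}(T*_z(φ)) = φ for every real z. -/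
open MeasureTheory Real

noncomputable def pathAinf (φ : ℝ → ℝ) : ℝ := ∫ u in Set.Ioi (0:ℝ), Real.exp (2 * φ u)

noncomputable def pathTstar (z : ℝ) (φ : ℝ → ℝ) (s : ℝ) : ℝ :=
  φ s - Real.log (1 + (pathA φ s / pathAinf φ) * (Real.exp z - 1))

theorem stmt10 (φ : ℝ → ℝ) (hφ : Continuous φ)
    (hInt : IntegrableOn (fun u => Real.exp (2 * φ u)) (Set.Ioi (0:ℝ)))
    (z : ℝ) (s : ℝ) (hs : 0 ≤ s) :
    pathTstar (-z) (pathTstar z φ) s = φ s := by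
  set c : ℝ := Real.exp z - 1 with hc
  set I : ℝ := pathAinf φ with hIdef
  set a : ℝ → ℝ := pathA φ with hadef
  set ψ : ℝ → ℝ := pathTstar z φ with hψdef
  have hce : Real.exp z = 1 + c := by rw [hc]; ring
  have h1c : (0:ℝ) < 1 + c := hce ▸ Real.exp_pos z
  have hcont : Continuous (fun u => Real.exp (2 * φ u)) :=
    Real.continuous_exp.comp (continuous_const.mul hφ)
  -- I > 0
  have hI : 0 < I := by
    rw [hIdef, pathAinf]
    rw [setIntegral_pos_iff_support_of_nonneg_ae
      (Filter.Eventually.of_forall fun u => (Real.exp_pos _).le) hInt]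
    have : Function.support (fun u => Real.exp (2 * φ u)) = Set.univ := by
      ext u; simp [(Real.exp_pos _).ne']
    rw [this, Set.univ_inter]
    simp [Real.volume_Ioi]
  have hIne : I ≠ 0 := hI.ne'
  -- derivative of a
  have hderivA : ∀ x : ℝ, HasDerivAt a (Real.exp (2 * φ x)) x := fun x =>
    intervalIntegral.integral_hasDerivAt_right (hcont.intervalIntegrable _ _)
      (hcont.stronglyMeasurable.stronglyMeasurableAtFilter) hcont.continuousAt
  have hacont : Continuous a := by
    rw [continuous_iff_continuousAt]; exact fun x => (hderivA x).continuousAt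
  have ha0 : a 0 = 0 := intervalIntegral.integral_same
  -- bounds on a
  have hanonneg : ∀ t : ℝ, 0 ≤ t → 0 ≤ a t := fun t ht =>
    intervalIntegral.integral_nonneg ht fun u _ => (Real.exp_pos _).le
  have haleI : ∀ t : ℝ, 0 ≤ t → a t ≤ I := by
    intro t ht
    rw [hadef, pathA, intervalIntegral.integral_of_le ht, hIdef, pathAinf]
    exact setIntegral_mono_set hInt
      (Filter.Eventually.of_forall fun u => (Real.exp_pos _).le)
      (HasSubset.Subset.eventuallyLE Set.Ioc_subset_Ioi_self)
  -- positivity of denominator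
  have hD : ∀ t : ℝ, 0 ≤ t → 0 < I + a t * c := by
    intro t ht
    have h1 := hanonneg t ht
    have h2 := haleI t ht
    have h3 : 0 < Real.exp z := Real.exp_pos z
    rw [hc]
    rcases eq_or_lt_of_le h1 with h | h
    · nlinarith
    · nlinarith
  -- value of exp(2 ψ)
  have hψval : ∀ u : ℝ, 0 ≤ u →
      Real.exp (2 * ψ u) = Real.exp (2 * φ u) * (I / (I + a u * c)) ^ 2 := by
    intro u hu
    have hX : (0:ℝ) < 1 + a u / I * c := by
      have := hD u hu
      have : (I + a u * c) / I > 0 := div_pos this hI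
      calc (0:ℝ) < (I + a u * c) / I := this
        _ = 1 + a u / I * c := by field_simp
    rw [hψdef, pathTstar]
    have : (2 : ℝ) * (φ u - Real.log (1 + pathA φ u / pathAinf φ * (Real.exp z - 1)))
        = 2 * φ u - 2 * Real.log (1 + a u / I * c) := by
      rw [← hadef, ← hIdef, ← hc]; ring
    rw [this, Real.exp_sub]
    have hexplog : Real.exp (2 * Real.log (1 + a u / I * c)) = (1 + a u / I * c) ^ 2 := by
      rw [two_mul, Real.exp_add, Real.exp_log hX]; ring
    rw [hexplog]
    have hXeq : 1 + a u / I * c = (I + a u * c) / I := by field_simp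
    rw [hXeq]
    rw [div_pow, div_pow]
    rw [div_div_eq_mul_div]
    field_simp
  -- define G and its derivative
  set G : ℝ → ℝ := fun t => I * a t / (I + a t * c) with hGdef
  have hG : ∀ t : ℝ, 0 ≤ t → HasDerivAt G (Real.exp (2 * ψ t)) t := by
    intro t ht
    have hnum : HasDerivAt (fun x => I * a x) (I * Real.exp (2 * φ t)) t :=
      (hderivA t).const_mul I
    have hden : HasDerivAt (fun x => I + a x * c) (Real.exp (2 * φ t) * c) t :=
      (((hderivA t).mul_const c).const_add I)
    have : HasDerivAt (fun x => I * a x / (I + a x * c))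
        ((I * Real.exp (2 * φ t) * (I + a t * c) - I * a t * (Real.exp (2 * φ t) * c)) / (I + a t * c) ^ 2) t :=
      hnum.div hden (hD t ht).ne'
    convert this using 1
    rw [hψval t ht]
    have hDt := (hD t ht).ne'
    field_simp
    ring
  -- pathA ψ s = G s
  have hψcontOn : ContinuousOn (fun u => Real.exp (2 * ψ u)) (Set.Ici 0) := by
    have hargcont : ContinuousOn (fun u => 1 + a u / I * c) (Set.Ici 0) :=
      (continuous_const.add ((hacont.div_const I).mul continuous_const)).continuousOn
    have hargpos : ∀ u ∈ Set.Ici (0:ℝ), (1 + a u / I * c) ≠ 0 := by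
      intro u hu
      have hpos : (0:ℝ) < 1 + a u / I * c := by
        have := hD u hu
        calc (0:ℝ) < (I + a u * c) / I := div_pos this hI
          _ = 1 + a u / I * c := by field_simp
      exact hpos.ne'
    have : ContinuousOn ψ (Set.Ici 0) := by
      apply ContinuousOn.sub hφ.continuousOn
      exact ContinuousOn.log hargcont hargpos
    exact Real.continuous_exp.comp_continuousOn (continuousOn_const.mul this)
  have hpathAψ : ∀ t : ℝ, 0 ≤ t → pathA ψ t = G t := by
    intro t ht
    rw [pathA]
    rw [intervalIntegral.integral_eq_sub_of_hasDerivAt (f := G)]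
    · rw [hGdef]; simp [ha0]
    · intro x hx
      rw [Set.uIcc_of_le ht] at hx
      exact hG x hx.1
    · apply ContinuousOn.intervalIntegrable
      rw [Set.uIcc_of_le ht]
      exact hψcontOn.mono (Set.Icc_subset_Ici_self)
  -- tendsto a atTop
  have haT : Filter.Tendsto a Filter.atTop (nhds I) := by
    have := intervalIntegral_tendsto_integral_Ioi (0:ℝ) hInt Filter.tendsto_id
    exact this
  -- tendsto G atTop
  have hIIc : I + I * c ≠ 0 := by
    have : I + I * c = I * (1 + c) := by ring
    rw [this]; exact mul_ne_zero hIne h1c.ne'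
  have hGT : Filter.Tendsto G Filter.atTop (nhds (I / (1 + c))) := by
    have h1 : Filter.Tendsto (fun t => I * a t) Filter.atTop (nhds (I * I)) :=
      (haT.const_mul I)
    have h2 : Filter.Tendsto (fun t => I + a t * c) Filter.atTop (nhds (I + I * c)) :=
      ((haT.mul_const c).const_add I)
    have : Filter.Tendsto (fun t => I * a t / (I + a t * c)) Filter.atTop (nhds (I * I / (I + I * c))) :=
      h1.div h2 hIIc
    convert this using 2
    rw [div_eq_div_iff h1c.ne' hIIc]
    ring
  -- integrability of exp(2ψ) on Ioi 0
  have hψint : IntegrableOn (fun u => Real.exp (2 * ψ u)) (Set.Ioi (0:ℝ)) := by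
    set m : ℝ := min I (I * (1 + c)) with hm
    have hmpos : 0 < m := lt_min hI (mul_pos hI h1c)
    apply Integrable.mono' (hInt.mul_const ((I / m) ^ 2))
    · exact (hψcontOn.mono Set.Ioi_subset_Ici_self).aestronglyMeasurable measurableSet_Ioi
    · filter_upwards [ae_restrict_mem measurableSet_Ioi] with u hu
      have hu' : (0:ℝ) ≤ u := (Set.mem_Ioi.mp hu).le
      rw [Real.norm_eq_abs, abs_of_pos (Real.exp_pos _), hψval u hu']
      have hmD : m ≤ I + a u * c := by
        rcases le_or_gt 0 c with hcn | hcn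
        · have : I ≤ I + a u * c := by nlinarith [hanonneg u hu']
          exact le_trans (min_le_left _ _) this
        · have : I * (1 + c) ≤ I + a u * c := by nlinarith [haleI u hu']
          exact le_trans (min_le_right _ _) this
      have hfrac : (I / (I + a u * c)) ^ 2 ≤ (I / m) ^ 2 := by
        apply pow_le_pow_left₀ (div_nonneg hI.le (hD u hu').le)
        exact div_le_div_of_nonneg_left hI.le hmpos hmD
      have := mul_le_mul_of_nonneg_left hfrac (Real.exp_pos (2 * φ u)).le
      exact this
  -- pathAinf ψ
  have hpathAinfψ : pathAinf ψ = I / (1 + c) := by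
    rw [pathAinf]
    have hcont0 : ContinuousWithinAt G (Set.Ici 0) 0 := by
      apply ContinuousOn.continuousWithinAt _ (Set.self_mem_Ici)
      intro x hx
      have h1 : ContinuousAt (fun t => I * a t) x := continuousAt_const.mul hacont.continuousAt
      have h2 : ContinuousAt (fun t => I + a t * c) x :=
        continuousAt_const.add (hacont.continuousAt.mul continuousAt_const)
      exact (h1.div h2 (hD x hx).ne').continuousWithinAt
    rw [integral_Ioi_of_hasDerivAt_of_tendsto hcont0
      (fun x hx => hG x (le_of_lt hx)) hψint hGT]
    rw [hGdef]; simp [ha0]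
  -- final computation
  rw [pathTstar, hpathAψ s hs, hpathAinfψ]
  have hXpos : (0:ℝ) < 1 + a s / I * c := by
    have := hD s hs
    calc (0:ℝ) < (I + a s * c) / I := div_pos this hI
      _ = 1 + a s / I * c := by field_simp
  have hkey : 1 + G s / (I / (1 + c)) * (Real.exp (-z) - 1) = (1 + a s / I * c)⁻¹ := by
    rw [Real.exp_neg, hce, hGdef]
    have hDs := (hD s hs).ne'
    field_simp
    ring
  rw [hkey, Real.log_inv, hψdef, pathTstar, ← hadef, ← hIdef, ← hc]
  ring
end

section
/- For φ ∈ C([0,∞);ℝ) with A_∞(φ) = ∞ and α > 0, the transform T_α(φ)(s) := φ(s) − log(1 + α A_s(φ)) satisfies A_s(T_α(φ)) = A_s(φ)/(1 + α A_s(φ)) for all s ≥ 0, and consequently A_∞(T_α(φ)) = 1/α. -/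
open MeasureTheory Real Filter

noncomputable def pathTalpha (α : ℝ) (φ : ℝ → ℝ) (s : ℝ) : ℝ :=
  φ s - Real.log (1 + α * pathA φ s)

theorem stmt11 (φ : ℝ → ℝ) (hφ : Continuous φ)
    (hAinf : Tendsto (fun s => pathA φ s) atTop atTop)
    (α : ℝ) (hα : 0 < α) :
    (∀ s, 0 ≤ s → pathA (pathTalpha α φ) s = pathA φ s / (1 + α * pathA φ s)) ∧
    Tendsto (fun s => pathA (pathTalpha α φ) s) atTop (nhds (1 / α)) := by
  have hexp : Continuous fun u => Real.exp (2 * φ u) :=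
    Real.continuous_exp.comp (continuous_const.mul hφ)
  have hAderiv : ∀ s : ℝ, HasDerivAt (pathA φ) (Real.exp (2 * φ s)) s := fun s =>
    intervalIntegral.integral_hasDerivAt_right (hexp.intervalIntegrable _ _)
      (hexp.stronglyMeasurableAtFilter _ _) hexp.continuousAt
  have hAcont : Continuous (pathA φ) :=
    continuous_iff_continuousAt.mpr fun s => (hAderiv s).continuousAt
  have hAnn : ∀ s : ℝ, 0 ≤ s → 0 ≤ pathA φ s := fun s hs =>
    intervalIntegral.integral_nonneg hs fun u _ => (Real.exp_pos _).le
  have hden : ∀ s : ℝ, 0 ≤ s → 0 < 1 + α * pathA φ s := fun s hs => by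
    have := mul_nonneg hα.le (hAnn s hs); linarith
  set G : ℝ → ℝ := fun u => Real.exp (2 * φ u) / (1 + α * pathA φ (max u 0)) ^ 2 with hGdef
  have hGcont : Continuous G := by
    apply hexp.div
    · exact (continuous_const.add (continuous_const.mul
        (hAcont.comp (continuous_id.max continuous_const)))).pow 2
    · intro u
      exact pow_ne_zero _ (hden _ (le_max_right _ _)).ne'
  have hG : ∀ u : ℝ, 0 ≤ u → Real.exp (2 * pathTalpha α φ u) = G u := by
    intro u hu
    have hD := hden u hu
    have hmax : max u 0 = u := max_eq_left hu
    have hlog : Real.exp (2 * Real.log (1 + α * pathA φ u)) = (1 + α * pathA φ u) ^ 2 := by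
      rw [two_mul, Real.exp_add, Real.exp_log hD, sq]
    simp only [hGdef, pathTalpha, hmax, mul_sub, Real.exp_sub, hlog]
  have hFderiv : ∀ s : ℝ, HasDerivAt (fun t => ∫ u in (0:ℝ)..t, G u) (G s) s := fun s =>
    intervalIntegral.integral_hasDerivAt_right (hGcont.intervalIntegrable _ _)
      (hGcont.stronglyMeasurableAtFilter _ _) hGcont.continuousAt
  have hgderiv : ∀ s : ℝ, 0 ≤ s →
      HasDerivAt (fun t => pathA φ t / (1 + α * pathA φ t)) (G s) s := by
    intro s hs
    have hD := hden s hs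
    have h := (hAderiv s).div (((hAderiv s).const_mul α).const_add 1) hD.ne'
    convert h using 1
    · rfl
    · rfl
    · rfl
    have hmax : max s 0 = s := max_eq_left hs
    simp only [hGdef, hmax]
    field_simp
    ring
  have key : ∀ s : ℝ, 0 ≤ s →
      (∫ u in (0:ℝ)..s, G u) = pathA φ s / (1 + α * pathA φ s) := by
    intro s hs
    have h := eq_of_has_deriv_right_eq (a := 0) (b := s)
      (f := fun t => ∫ u in (0:ℝ)..t, G u)
      (g := fun t => pathA φ t / (1 + α * pathA φ t)) (f' := G)
      (fun x hx => (hFderiv x).hasDerivWithinAt)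
      (fun x hx => (hgderiv x hx.1).hasDerivWithinAt)
      (continuous_iff_continuousAt.mpr fun x => (hFderiv x).continuousAt).continuousOn
      ((hAcont.continuousOn).div
        ((continuous_const.add (continuous_const.mul hAcont)).continuousOn)
        (fun x hx => (hden x hx.1).ne'))
      (by simp [pathA])
    exact h s ⟨hs, le_refl s⟩
  have part1 : ∀ s, 0 ≤ s → pathA (pathTalpha α φ) s = pathA φ s / (1 + α * pathA φ s) := by
    intro s hs
    have : pathA (pathTalpha α φ) s = ∫ u in (0:ℝ)..s, G u := by
      apply intervalIntegral.integral_congr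
      intro u hu
      rw [Set.uIcc_of_le hs] at hu
      exact hG u hu.1
    rw [this, key s hs]
  refine ⟨part1, ?_⟩
  have h1 : Tendsto (fun x : ℝ => x⁻¹ + α) atTop (nhds (0 + α)) :=
    tendsto_inv_atTop_zero.add tendsto_const_nhds
  have h2 : Tendsto (fun x : ℝ => (x⁻¹ + α)⁻¹) atTop (nhds ((0 + α)⁻¹)) :=
    h1.inv₀ (by simpa using hα.ne')
  have hlim : Tendsto (fun x : ℝ => x / (1 + α * x)) atTop (nhds (1 / α)) := by
    have heq : (fun x : ℝ => (x⁻¹ + α)⁻¹) =ᶠ[atTop] fun x : ℝ => x / (1 + α * x) := by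
      filter_upwards [eventually_gt_atTop (0 : ℝ)] with x hx
      have hx' : x ≠ 0 := hx.ne'
      have hdx : (1 + α * x) ≠ 0 := by nlinarith [mul_pos hα hx]
      field_simp
    have : (0 + α)⁻¹ = 1 / α := by simp
    rw [this] at h2
    exact h2.congr' heq
  have hfinal : Tendsto (fun s => pathA φ s / (1 + α * pathA φ s)) atTop (nhds (1 / α)) :=
    hlim.comp hAinf
  refine hfinal.congr' ?_
  filter_upwards [eventually_ge_atTop (0 : ℝ)] with s hs
  exact (part1 s hs).symm
end

section
/- Let φ ∈ C([0,∞);ℝ) with A_∞(φ) = ∞. For every real z and α > 0, T*_z(T_α(φ)) = T_{α e^z}(φ), where T_α(φ)(s) = φ(s) − log(1 + α A_s(φ)) and T*_z is defined using A_∞(T_α(φ)) = 1/α. -/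
open MeasureTheory Real Filter

theorem stmt12 (φ : ℝ → ℝ) (hφ : Continuous φ)
    (hAinf : Tendsto (fun s => pathA φ s) atTop atTop)
    (z α : ℝ) (hα : 0 < α) (s : ℝ) (hs : 0 ≤ s) :
    pathTstar z (pathTalpha α φ) s = pathTalpha (α * Real.exp z) φ s := by
  have hcont : Continuous fun u => Real.exp (2 * φ u) := by continuity
  have hA0 : pathA φ 0 = 0 := intervalIntegral.integral_same
  have hAderiv : ∀ u : ℝ, HasDerivAt (pathA φ) (Real.exp (2 * φ u)) u := fun u =>
    (hcont.integral_hasStrictDerivAt 0 u).hasDerivAt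
  have hAcont : Continuous (pathA φ) :=
    continuous_iff_continuousAt.2 fun u => (hAderiv u).continuousAt
  have hAnn : ∀ u : ℝ, 0 ≤ u → 0 ≤ pathA φ u := fun u hu =>
    intervalIntegral.integral_nonneg hu (fun x _ => (Real.exp_pos _).le)
  have hpos : ∀ u : ℝ, 0 ≤ u → 0 < 1 + α * pathA φ u := fun u hu => by
    have := hAnn u hu; nlinarith
  -- exp of 2 ψ
  have expψ : ∀ u : ℝ, 0 ≤ u →
      Real.exp (2 * pathTalpha α φ u) = Real.exp (2 * φ u) / (1 + α * pathA φ u) ^ 2 := by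
    intro u hu
    have hp := hpos u hu
    rw [pathTalpha, mul_sub, Real.exp_sub]
    congr 1
    rw [show (2 : ℝ) * Real.log (1 + α * pathA φ u)
        = Real.log ((1 + α * pathA φ u) ^ 2) by rw [Real.log_pow]; push_cast; ring,
      Real.exp_log (by positivity)]
  -- the antiderivative
  set g : ℝ → ℝ := fun u => -(1 / α) * (1 + α * pathA φ u)⁻¹ with hg_def
  have hgderiv : ∀ u : ℝ, 0 ≤ u →
      HasDerivAt g (Real.exp (2 * pathTalpha α φ u)) u := by
    intro u hu
    have hp := hpos u hu
    have h1 : HasDerivAt (fun v => 1 + α * pathA φ v) (α * Real.exp (2 * φ u)) u :=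
      ((hAderiv u).const_mul α).const_add 1
    have h2 := (h1.inv hp.ne').const_mul (-(1 / α))
    refine h2.congr_deriv ?_
    rw [expψ u hu]
    field_simp
  -- interval integrability of exp(2ψ) on [0, s]
  have hψcont : ContinuousOn (fun u => Real.exp (2 * pathTalpha α φ u)) (Set.Icc 0 s) := by
    apply Real.continuous_exp.comp_continuousOn
    apply continuousOn_const.mul
    apply (hφ.continuousOn.sub (ContinuousOn.log ?_ ?_))
    · exact (continuous_const.add (continuous_const.mul hAcont)).continuousOn
    · intro x hx; exact (hpos x hx.1).ne'
  have hψint : IntervalIntegrable (fun u => Real.exp (2 * pathTalpha α φ u)) volume 0 s := by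
    apply ContinuousOn.intervalIntegrable
    rwa [Set.uIcc_of_le hs]
  -- pathA of ψ
  have hAψ : pathA (pathTalpha α φ) s = pathA φ s / (1 + α * pathA φ s) := by
    have := intervalIntegral.integral_eq_sub_of_hasDerivAt
      (f := g) (f' := fun u => Real.exp (2 * pathTalpha α φ u)) (a := 0) (b := s)
      (fun u hu => hgderiv u (by rw [Set.uIcc_of_le hs] at hu; exact hu.1)) hψint
    rw [pathA, this, hg_def]
    have hp := hpos s hs
    simp only [hA0]
    field_simp
    ring
  -- pathAinf of ψ
  have hAinfψ : pathAinf (pathTalpha α φ) = 1 / α := by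
    have htend : Tendsto g atTop (nhds 0) := by
      have h1 : Tendsto (fun u => 1 + α * pathA φ u) atTop atTop :=
        tendsto_atTop_add_const_left _ 1 (hAinf.const_mul_atTop hα)
      have h2 : Tendsto (fun u => (1 + α * pathA φ u)⁻¹) atTop (nhds 0) :=
        h1.inv_tendsto_atTop
      have := h2.const_mul (-(1 / α))
      simpa [hg_def, one_div, neg_mul] using this
    have := MeasureTheory.integral_Ioi_of_hasDerivAt_of_nonneg'
      (fun x hx => hgderiv x hx) (fun x _ => (Real.exp_pos _).le) htend
    rw [pathAinf, this, hg_def]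
    simp [hA0]
  -- final computation
  rw [pathTstar, hAψ, hAinfψ, pathTalpha, pathTalpha]
  have hp := hpos s hs
  have hA := hAnn s hs
  have hez : (0:ℝ) < Real.exp z := Real.exp_pos z
  have hnum : 0 < 1 + α * Real.exp z * pathA φ s := by
    have := mul_nonneg (mul_nonneg hα.le hez.le) hA; linarith
  have harg : 1 + pathA φ s / (1 + α * pathA φ s) / (1 / α) * (Real.exp z - 1)
      = (1 + α * Real.exp z * pathA φ s) / (1 + α * pathA φ s) := by
    field_simp
    ring
  rw [harg, Real.log_div hnum.ne' hp.ne']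
  ring
end
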